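/- Let A and B be positive invertible bounded operators on a complex Hilbert space such that A − B ≥ m·I for some scalar m > 0. Then B⁻¹ − A⁻¹ ≥ m(‖A‖ − m)⁻¹‖A‖⁻¹ · I. -/

import Mathlib

theorem inverse_difference_lower_bound_normA
    {H : Type*} [NormedAddCommGroup H] [InnerProductSpace ℂ H] [CompleteSpace H] [Nontrivial H]
    (A B : H →L[ℂ] H) (hA : IsSelfAdjoint A) (hB : IsSelfAdjoint B)
    (hApos : 0 ≤ A) (hBpos : 0 ≤ B) (hAinv : IsUnit A) (hBinv : IsUnit B)
    (m : ℝ) (hm : 0 < m) (hAB : m • (1 : H →L[ℂ] H) ≤ A - B) :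
    (m * (‖A‖ - m)⁻¹ * ‖A‖⁻¹) • (1 : H →L[ℂ] H) ≤ Ring.inverse B - Ring.inverse A := by
  -- B ≤ A - m•1
  have hABle : B ≤ A - m • (1 : (H →L[ℂ] H)) := by
    have h1 : m • (1 : (H →L[ℂ] H)) + B ≤ A := by rwa [← le_sub_iff_add_le]
    rw [le_sub_iff_add_le, add_comm]
    exact h1
  -- spectrum of B is positive; get ε > 0 with ε•1 ≤ B
  have hBspec : ∀ x ∈ spectrum ℝ B, 0 < x := by
    intro x hx
    have h0 : 0 ≤ x := spectrum_nonneg_of_nonneg hBpos hx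
    have hne : x ≠ 0 := by
      rintro rfl
      exact (spectrum.zero_notMem_iff ℝ).mpr hBinv hx
    exact lt_of_le_of_ne h0 (Ne.symm hne)
  obtain ⟨ε, hε, hεB⟩ := (CFC.exists_pos_algebraMap_le_iff (a := B) hB).mpr hBspec
  -- A ≥ (m+ε)•1
  have hmA : algebraMap ℝ (H →L[ℂ] H) (m + ε) ≤ A := by
    have : algebraMap ℝ (H →L[ℂ] H) (m + ε) = m • (1 : (H →L[ℂ] H)) + algebraMap ℝ (H →L[ℂ] H) ε := by
      rw [map_add, Algebra.algebraMap_eq_smul_one]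
    rw [this]
    calc m • (1 : (H →L[ℂ] H)) + algebraMap ℝ (H →L[ℂ] H) ε ≤ (A - B) + B := add_le_add hAB hεB
      _ = A := by abel
  have hAspec_lo : ∀ x ∈ spectrum ℝ A, m + ε ≤ x :=
    (algebraMap_le_iff_le_spectrum (a := A) hA).mp hmA
  have hAspec_hi : ∀ x ∈ spectrum ℝ A, x ≤ ‖A‖ := fun x hx =>
    (Real.le_norm_self x).trans (spectrum.norm_le_norm_of_mem hx)
  -- ‖A‖ > m
  have hmr : m + ε ≤ ‖A‖ := by
    obtain ⟨x, hx⟩ := ContinuousFunctionalCalculus.spectrum_nonempty (R := ℝ) A hA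
    exact (hAspec_lo x hx).trans (hAspec_hi x hx)
  have hrm : m < ‖A‖ := by linarith
  set r := ‖A‖ with hr
  -- U := A - m•1
  set U := A - m • (1 : (H →L[ℂ] H)) with hUdef
  have hUcfc : cfc (fun t : ℝ => t - m) A = U := by
    rw [cfc_sub (fun t : ℝ => t) (fun _ : ℝ => m) A, cfc_id' ℝ A, cfc_const m A,
      Algebra.algebraMap_eq_smul_one]
  have hUsa : IsSelfAdjoint U := hUcfc ▸ cfc_predicate (fun t : ℝ => t - m) A
  have hUunit : IsUnit U := CStarAlgebra.isUnit_of_le B hABle ⟨hBpos, hBinv⟩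
  have hUpos : (0 : (H →L[ℂ] H)) ≤ U := hBpos.trans hABle
  -- spectrum facts give nonvanishing
  have hne1 : ∀ x ∈ spectrum ℝ A, x - m ≠ 0 := fun x hx => by
    have := hAspec_lo x hx; intro h; linarith
  have hne2 : ∀ x ∈ spectrum ℝ A, x ≠ 0 := fun x hx => by
    have := hAspec_lo x hx; intro h; linarith
  have hcont1 : ContinuousOn (fun t : ℝ => (t - m)⁻¹) (spectrum ℝ A) :=
    ((continuousOn_id.sub continuousOn_const).inv₀ hne1)
  have hcont2 : ContinuousOn (fun t : ℝ => t⁻¹) (spectrum ℝ A) :=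
    (continuousOn_id.inv₀ hne2)
  -- inverses as cfc
  have hinvU : cfc (fun t : ℝ => (t - m)⁻¹) A = Ring.inverse U := by
    rw [cfc_inv (f := fun t : ℝ => t - m) (a := A) hne1, hUcfc]
  have hinvA : cfc (fun t : ℝ => t⁻¹) A = Ring.inverse A := by
    have h1 : cfc (fun t : ℝ => t⁻¹) ((hAinv.unit : (H →L[ℂ] H))) = ↑hAinv.unit⁻¹ :=
      cfc_inv_id (R := ℝ) hAinv.unit (by rw [hAinv.unit_spec]; exact hA)
    rw [hAinv.unit_spec] at h1
    rw [h1, ← Ring.inverse_unit hAinv.unit, hAinv.unit_spec]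
  -- part 2 : scalar bound on Ring.inverse U - Ring.inverse A
  have key : algebraMap ℝ (H →L[ℂ] H) (m * (r - m)⁻¹ * r⁻¹) ≤ Ring.inverse U - Ring.inverse A := by
    have hsub : cfc (fun t : ℝ => (t - m)⁻¹ - t⁻¹) A = Ring.inverse U - Ring.inverse A := by
      rw [cfc_sub (fun t : ℝ => (t - m)⁻¹) (fun t : ℝ => t⁻¹) A hcont1 hcont2, hinvU, hinvA]
    rw [← hsub]
    apply algebraMap_le_cfc _ _ A ?_ (hcont1.sub hcont2) hA
    intro x hx
    have h1 := hAspec_lo x hx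
    have h2 := hAspec_hi x hx
    have hxm : 0 < x - m := by linarith
    have hx0 : 0 < x := by linarith
    have hrm0 : 0 < r - m := by linarith
    have hr0 : 0 < r := by linarith
    have heq : (x - m)⁻¹ - x⁻¹ = m * (x - m)⁻¹ * x⁻¹ := by
      field_simp
      ring
    simp only [Pi.sub_apply]
    rw [heq]
    gcongr
  -- part 1 : Ring.inverse U ≤ Ring.inverse B
  have part1 : Ring.inverse U ≤ Ring.inverse B := by
    have h := CStarAlgebra.inv_le_inv (A := (H →L[ℂ] H)) (a := hBinv.unit) (b := hUunit.unit)
      (by rw [hBinv.unit_spec]; exact hBpos)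
      (by rw [hBinv.unit_spec, hUunit.unit_spec]; exact hABle)
    have e1 : (↑hUunit.unit⁻¹ : (H →L[ℂ] H)) = Ring.inverse U := by
      rw [← Ring.inverse_unit hUunit.unit, hUunit.unit_spec]
    have e2 : (↑hBinv.unit⁻¹ : (H →L[ℂ] H)) = Ring.inverse B := by
      rw [← Ring.inverse_unit hBinv.unit, hBinv.unit_spec]
    rwa [e1, e2] at h
  calc (m * (r - m)⁻¹ * r⁻¹) • (1 : (H →L[ℂ] H)) = algebraMap ℝ (H →L[ℂ] H) (m * (r - m)⁻¹ * r⁻¹) := by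
        rw [Algebra.algebraMap_eq_smul_one]
    _ ≤ Ring.inverse U - Ring.inverse A := key
    _ ≤ Ring.inverse B - Ring.inverse A := sub_le_sub_right part1 _
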